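/- Let D and D' be two distinct probability distributions on a finite set [n] (i.e., D(i) ≠ D'(i) for some i). If S ⊆ [n] is a uniformly random subset (each element included independently with probability 1/2), then Pr[D(S) ≠ D'(S)] ≥ 1/2, where D(S) = ∑_{i∈S} D(i). -/

import Mathlib

/-- If `D ≠ D'` are two probability distributions on `Fin n`, then a uniformly random
subset `S ⊆ [n]` (each element included independently with probability `1/2`) satisfies
`D(S) ≠ D'(S)` with probability at least `1/2`. The probability is expressed as the
fraction of subsets `S` with `∑_{i∈S} D(i) ≠ ∑_{i∈S} D'(i)`. -/
theorem stmt_2 {n : ℕ} (D D' : Fin n → ℝ)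
    (hD0 : ∀ i, 0 ≤ D i) (hD'0 : ∀ i, 0 ≤ D' i)
    (hD1 : ∑ i, D i = 1) (hD'1 : ∑ i, D' i = 1)
    (hne : D ≠ D') :
    (1 : ℝ) / 2 ≤
      (((Finset.univ : Finset (Fin n)).powerset.filter
          (fun S => ∑ i ∈ S, D i ≠ ∑ i ∈ S, D' i)).card : ℝ) / 2 ^ n := by
  obtain ⟨i₀, hi₀⟩ := Function.ne_iff.mp hne
  set U := (Finset.univ : Finset (Fin n)).powerset with hU
  set P : Finset (Fin n) → Prop := fun S => ∑ i ∈ S, D i ≠ ∑ i ∈ S, D' i with hP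
  classical
  have hcard : (U.filter P).card + (U.filter (fun S => ¬ P S)).card = 2 ^ n := by
    rw [Finset.card_filter_add_card_filter_not]
    simp [hU, Finset.card_powerset]
  have hle : (U.filter (fun S => ¬ P S)).card ≤ (U.filter P).card := by
    apply Finset.card_le_card_of_injOn (fun S => symmDiff S {i₀})
    · intro S hS
      simp only [Finset.coe_filter, Set.mem_setOf_eq, Finset.mem_coe, Finset.mem_filter, hP, not_not] at hS
      obtain ⟨_, hSsum⟩ := hS
      refine Finset.mem_filter.mpr ⟨by simp [hU], ?_⟩
      by_cases h : i₀ ∈ S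
      · have hsd : symmDiff S {i₀} = S.erase i₀ := by
          ext x
          simp only [Finset.mem_symmDiff, Finset.mem_erase, Finset.mem_singleton]
          rcases eq_or_ne x i₀ with rfl | hx <;> simp_all
        rw [show (fun S => symmDiff S {i₀}) S = _ from hsd]
        intro hcontra
        have h1 : ∑ i ∈ S.erase i₀, D i + D i₀ = ∑ i ∈ S, D i :=
          Finset.sum_erase_add _ _ h
        have h2 : ∑ i ∈ S.erase i₀, D' i + D' i₀ = ∑ i ∈ S, D' i :=
          Finset.sum_erase_add _ _ h
        apply hi₀
        linarith [hcontra, hSsum]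
      · have hsd : symmDiff S {i₀} = insert i₀ S := by
          ext x
          simp only [Finset.mem_symmDiff, Finset.mem_insert, Finset.mem_singleton]
          rcases eq_or_ne x i₀ with rfl | hx <;> simp_all
        rw [show (fun S => symmDiff S {i₀}) S = _ from hsd]
        simp only [hP, Finset.sum_insert h]
        intro hcontra
        apply hi₀
        linarith [hcontra, hSsum]
    · intro a _ b _ hab
      have := congrArg (fun T => symmDiff T ({i₀} : Finset (Fin n))) hab
      simpa [symmDiff_symmDiff_cancel_right] using this
  have h2 : 2 ^ n ≤ 2 * (U.filter P).card := by omega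
  have h2' : ((2 : ℝ)) ^ n ≤ 2 * ((U.filter P).card : ℝ) := by exact_mod_cast h2
  rw [div_le_div_iff₀ (by norm_num) (by positivity)]
  calc (1 : ℝ) * 2 ^ n = (2:ℝ) ^ n := by ring
    _ ≤ 2 * ((U.filter P).card : ℝ) := h2'
    _ = ((U.filter P).card : ℝ) * 2 := by ring
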